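/- For any two k-bit vectors X, Y (k = 1+j+x) with the same sign bit, interpreted both as floating point and as two's complement integers: |FP(X)| > |FP(Y)| if and only if SI(X) > SI(Y). (Lemma 2 of the paper: the integer ordering of the raw bits refines the floating point magnitude ordering when sign bits agree.) -/
import Mathlib


/-- Unsigned integer interpretation of a bit vector. -/
def UI {k : ℕ} (B : Fin k → Bool) : ℕ :=
  ∑ i : Fin k, if B i then 2 ^ (i : ℕ) else 0

/-- Two's complement (signed integer) interpretation of a (k+1)-bit vector. -/
def SI {k : ℕ} (B : Fin (k + 1) → Bool) : ℤ :=
  if B (Fin.last k) then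
    -2 ^ k + ∑ i : Fin k, (if B i.castSucc then (2 : ℤ) ^ (i : ℕ) else 0)
  else (UI B : ℤ)

/-- Sign bit of a floating point bit vector of length x + j + 1. -/
def signBit (j x : ℕ) (B : Fin (x + j + 1) → Bool) : Bool := B (Fin.last (x + j))

/-- Unsigned value of the exponent field. -/
def expo (j x : ℕ) (B : Fin (x + j + 1) → Bool) : ℕ :=
  ∑ i : Fin j, if B ⟨x + (i : ℕ), by have := i.isLt; omega⟩ then 2 ^ (i : ℕ) else 0

/-- Unsigned value of the mantissa field. -/
def mant (j x : ℕ) (B : Fin (x + j + 1) → Bool) : ℕ :=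
  ∑ i : Fin x, if B ⟨(i : ℕ), by have := i.isLt; omega⟩ then 2 ^ (i : ℕ) else 0

/-- The exponent bias 2^(j-1) - 1. -/
def bias (j : ℕ) : ℤ := 2 ^ (j - 1) - 1

/-- Floating point magnitude (normalized if exponent field nonzero, else denormalized). -/
def mag (j x : ℕ) (B : Fin (x + j + 1) → Bool) : ℚ :=
  if expo j x B = 0 then
    (2 : ℚ) ^ ((1 : ℤ) - bias j) * (mant j x B) * (2 : ℚ) ^ (-(x : ℤ))
  else
    (2 : ℚ) ^ ((expo j x B : ℤ) - bias j) * (1 + (mant j x B) * (2 : ℚ) ^ (-(x : ℤ)))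

/-- Floating point interpretation, as a signed-magnitude value: the sign is paired
(lexicographically) with the (sign-adjusted) magnitude, so that -0 < +0. -/
def FP (j x : ℕ) (B : Fin (x + j + 1) → Bool) : ℤ ×ₗ ℚ :=
  toLex (if signBit j x B then ((0 : ℤ), -(mag j x B)) else ((1 : ℤ), mag j x B))

/-- The floating point value +0. -/
def fpZero : ℤ ×ₗ ℚ := toLex ((1 : ℤ), (0 : ℚ))

/-- Mask with only the most significant bit set. -/
def mask (k : ℕ) : Fin (k + 1) → Bool := fun i => decide (i = Fin.last k)

/-- Bitwise XOR of two bit vectors. -/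
def xorVec {k : ℕ} (X Y : Fin k → Bool) : Fin k → Bool := fun i => xor (X i) (Y i)

/-- Negation of a floating point value: swap the sign, keep the magnitude. -/
def fpNeg (p : ℤ ×ₗ ℚ) : ℤ ×ₗ ℚ := toLex (1 - (ofLex p).1, -(ofLex p).2)

-- auxiliary definitions/lemmas

def gval (j x : ℕ) (e m : ℕ) : ℚ :=
  if e = 0 then (2 : ℚ) ^ ((1 : ℤ) - bias j) * m * (2 : ℚ) ^ (-(x : ℤ))
  else (2 : ℚ) ^ ((e : ℤ) - bias j) * (1 + m * (2 : ℚ) ^ (-(x : ℤ)))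

def fval (j x : ℕ) (n : ℕ) : ℚ := gval j x (n / 2 ^ x) (n % 2 ^ x)

lemma mul_zpow_neg_lt_one {x m : ℕ} (hm : m < 2 ^ x) :
    (m : ℚ) * (2 : ℚ) ^ (-(x : ℤ)) < 1 := by
  rw [zpow_neg, zpow_natCast, mul_inv_lt_iff₀ (by positivity), one_mul]
  exact_mod_cast hm

lemma fval_strictMono (j x : ℕ) : StrictMono (fval j x) := by
  apply strictMono_nat_of_lt_succ
  intro n
  obtain ⟨e, m, hm, rfl⟩ : ∃ e m, m < 2 ^ x ∧ n = 2 ^ x * e + m :=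
    ⟨n / 2 ^ x, n % 2 ^ x, Nat.mod_lt _ (by positivity), (Nat.div_add_mod n (2 ^ x)).symm⟩
  have hp0 : (0:ℕ) < 2 ^ x := by positivity
  have hdiv : (2 ^ x * e + m) / 2 ^ x = e := by
    rw [Nat.mul_add_div hp0, Nat.div_eq_of_lt hm, add_zero]
  have hmod : (2 ^ x * e + m) % 2 ^ x = m := by
    rw [Nat.mul_add_mod, Nat.mod_eq_of_lt hm]
  have hz : (0:ℚ) < (2:ℚ) ^ (-(x:ℤ)) := by positivity
  by_cases h : m + 1 < 2 ^ x
  · have hdiv' : (2 ^ x * e + m + 1) / 2 ^ x = e := by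
      rw [add_assoc, Nat.mul_add_div hp0, Nat.div_eq_of_lt h, add_zero]
    have hmod' : (2 ^ x * e + m + 1) % 2 ^ x = m + 1 := by
      rw [add_assoc, Nat.mul_add_mod, Nat.mod_eq_of_lt h]
    unfold fval gval
    rw [hdiv, hmod, hdiv', hmod']
    split
    · have h2 : (0:ℚ) < (2:ℚ) ^ ((1:ℤ) - bias j) := by positivity
      push_cast
      nlinarith
    · have h2 : (0:ℚ) < (2:ℚ) ^ ((e:ℤ) - bias j) := by positivity
      push_cast
      nlinarith
  · have hmp : m + 1 = 2 ^ x := by omega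
    have hkey : 2 ^ x * e + m + 1 = 2 ^ x * (e + 1) := by rw [Nat.mul_succ]; omega
    have hdiv' : (2 ^ x * e + m + 1) / 2 ^ x = e + 1 := by
      rw [hkey, Nat.mul_div_cancel_left _ hp0]
    have hmod' : (2 ^ x * e + m + 1) % 2 ^ x = 0 := by rw [hkey, Nat.mul_mod_right]
    unfold fval gval
    rw [hdiv, hmod, hdiv', hmod']
    rw [if_neg (Nat.succ_ne_zero e)]
    have hlt : (m:ℚ) * (2:ℚ) ^ (-(x:ℤ)) < 1 := mul_zpow_neg_lt_one hm
    have hstep : (2:ℚ) ^ (((e + 1 : ℕ) : ℤ) - bias j)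
        = (2:ℚ) ^ ((e:ℤ) - bias j) * 2 := by
      push_cast
      rw [show ((e:ℤ) + 1 - bias j) = ((e:ℤ) - bias j) + 1 by ring,
        zpow_add₀ (two_ne_zero), zpow_one]
    rw [hstep]
    simp only [Nat.cast_zero, zero_mul, add_zero, mul_one]
    split
    · rename_i he
      rw [he]
      simp only [Nat.cast_zero]
      have hc : (2:ℚ) ^ ((0:ℤ) - bias j) * 2 = (2:ℚ) ^ ((1:ℤ) - bias j) := by
        rw [show ((1:ℤ) - bias j) = ((0:ℤ) - bias j) + 1 by ring,
          zpow_add₀ (two_ne_zero), zpow_one]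
      rw [hc]
      have h2 : (0:ℚ) < (2:ℚ) ^ ((1:ℤ) - bias j) := by positivity
      nlinarith
    · have h2 : (0:ℚ) < (2:ℚ) ^ ((e:ℤ) - bias j) := by positivity
      nlinarith

lemma gval_eq_fval (j x e m : ℕ) (hm : m < 2 ^ x) :
    gval j x e m = fval j x (2 ^ x * e + m) := by
  unfold fval
  rw [Nat.mul_add_div (by positivity), Nat.mul_add_mod, Nat.div_eq_of_lt hm,
    Nat.mod_eq_of_lt hm, Nat.add_zero]

lemma sum_range_two_pow (k : ℕ) : ∑ i ∈ Finset.range k, 2 ^ i = 2 ^ k - 1 := by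
  induction k with
  | zero => simp
  | succ n ih =>
    rw [Finset.sum_range_succ, ih, pow_succ]
    have : 1 ≤ 2 ^ n := Nat.one_le_two_pow
    omega

lemma mant_lt (j x : ℕ) (B : Fin (x + j + 1) → Bool) : mant j x B < 2 ^ x := by
  unfold mant
  calc (∑ i : Fin x, if B ⟨(i : ℕ), by have := i.isLt; omega⟩ then 2 ^ (i : ℕ) else 0)
      ≤ ∑ i : Fin x, 2 ^ (i : ℕ) := by
        apply Finset.sum_le_sum; intro i _; split <;> simp
    _ < 2 ^ x := by
        rw [Fin.sum_univ_eq_sum_range, sum_range_two_pow]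
        have : 1 ≤ 2 ^ x := Nat.one_le_two_pow
        omega

lemma mag_eq (j x : ℕ) (B : Fin (x + j + 1) → Bool) :
    mag j x B = fval j x (2 ^ x * expo j x B + mant j x B) := by
  rw [← gval_eq_fval j x _ _ (mant_lt j x B)]; rfl

lemma low_eq (j x : ℕ) (B : Fin (x + j + 1) → Bool) :
    (∑ i : Fin (x + j), (if B i.castSucc then (2 : ℤ) ^ (i : ℕ) else 0))
      = ((2 ^ x * expo j x B + mant j x B : ℕ) : ℤ) := by
  rw [Fin.sum_univ_add]
  unfold mant expo
  push_cast
  have h1 : (∑ i : Fin x, if B (Fin.castAdd j i).castSucc then (2:ℤ) ^ ((Fin.castAdd j i : Fin (x+j)) : ℕ) else 0)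
      = ∑ i : Fin x, (if B ⟨(i:ℕ), by have := i.isLt; omega⟩ then (2:ℤ) ^ (i:ℕ) else 0) := by
    apply Finset.sum_congr rfl
    intro i _
    have hb : ((Fin.castAdd j i).castSucc : Fin (x + j + 1))
        = ⟨(i:ℕ), by have := i.isLt; omega⟩ := by
      apply Fin.ext; simp
    rw [hb]
    simp
  have h2 : (∑ i : Fin j, if B (Fin.natAdd x i).castSucc then (2:ℤ) ^ ((Fin.natAdd x i : Fin (x+j)) : ℕ) else 0)
      = (2:ℤ) ^ x * ∑ i : Fin j, (if B ⟨x + (i:ℕ), by have := i.isLt; omega⟩ then (2:ℤ) ^ (i:ℕ) else 0) := by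
    rw [Finset.mul_sum]
    apply Finset.sum_congr rfl
    intro i _
    have hb : ((Fin.natAdd x i).castSucc : Fin (x + j + 1))
        = ⟨x + (i:ℕ), by have := i.isLt; omega⟩ := by
      apply Fin.ext; simp
    rw [hb]
    split <;> simp [pow_add]
  rw [h1, h2]
  ring

lemma SI_eq {k : ℕ} (B : Fin (k + 1) → Bool) :
    SI B = (if B (Fin.last k) then -2 ^ k else 0)
      + ∑ i : Fin k, (if B i.castSucc then (2 : ℤ) ^ (i : ℕ) else 0) := by
  unfold SI UI
  split
  · rfl
  · rename_i h
    rw [zero_add]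
    push_cast
    rw [Fin.sum_univ_castSucc]
    simp [h]


/-- Lemma 2: with equal sign bits, the floating point magnitude
ordering coincides with the two's complement ordering of the raw bits. -/
theorem mag_gt_iff_si_gt (j x : ℕ) (hj : 1 ≤ j) (X Y : Fin (x + j + 1) → Bool)
    (hs : signBit j x X = signBit j x Y) :
    mag j x X > mag j x Y ↔ SI X > SI Y := by
  unfold signBit at hs
  rw [gt_iff_lt, gt_iff_lt, mag_eq, mag_eq, (fval_strictMono j x).lt_iff_lt,
    SI_eq, SI_eq, low_eq, low_eq, hs, add_lt_add_iff_left, Nat.cast_lt]
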